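/- If the convex hull of S contains some point of T \ S, then V_T(S) is empty. -/

import Mathlib

open Finset Metric
open scoped Classical

/-- The multipoint (higher-order) Voronoi cell of `S` within the set of sites `T`. -/
def vcell {n : ℕ} (T S : Finset (EuclideanSpace ℝ (Fin n))) :
    Set (EuclideanSpace ℝ (Fin n)) :=
  {x | ∀ s ∈ S, ∀ t ∈ T \ S, dist x s ≤ dist x t}

theorem stmt_4 {n : ℕ} (T S : Finset (EuclideanSpace ℝ (Fin n)))
    (hS : S.Nonempty) (hST : S ⊂ T)
    (h : ∃ t ∈ T \ S, t ∈ convexHull ℝ (↑S : Set (EuclideanSpace ℝ (Fin n)))) :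
    vcell T S = ∅ := by
  obtain ⟨t, htTS, htc⟩ := h
  ext x
  simp only [Set.mem_empty_iff_false, iff_false]
  intro hx
  have htS : t ∉ S := (Finset.mem_sdiff.mp htTS).2
  set v := x - t with hv
  have key : (S : Set (EuclideanSpace ℝ (Fin n))) ⊆
      {y | (inner ℝ v t : ℝ) < inner ℝ v y} := by
    intro s hs
    have hsS : s ∈ S := hs
    have hst : s ≠ t := fun h => htS (h ▸ hsS)
    have hd : dist x s ≤ dist x t := hx s hsS t htTS
    have h1 : ‖x - s‖ ≤ ‖x - t‖ := by rwa [dist_eq_norm, dist_eq_norm] at hd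
    have h2 : ‖x - s‖ ^ 2 ≤ ‖x - t‖ ^ 2 := by
      have := norm_nonneg (x - s)
      nlinarith [norm_nonneg (x - t)]
    have hexp : ‖x - s‖ ^ 2 = ‖v‖ ^ 2 + 2 * (inner ℝ v (t - s) : ℝ) + ‖t - s‖ ^ 2 := by
      have : x - s = v + (t - s) := by rw [hv]; abel
      rw [this, norm_add_sq_real]
    have hpos : 0 < ‖t - s‖ ^ 2 :=
      pow_pos (norm_sub_pos_iff.mpr (Ne.symm hst)) 2
    have hinner : (inner ℝ v (t - s) : ℝ) = (inner ℝ v t : ℝ) - inner ℝ v s :=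
      inner_sub_right v t s
    simp only [Set.mem_setOf_eq]
    nlinarith [h2, hexp, hpos]
  have hlin : IsLinearMap ℝ (fun y : EuclideanSpace ℝ (Fin n) => (inner ℝ v y : ℝ)) :=
    ⟨fun a b => inner_add_right v a b, fun c a => real_inner_smul_right v a c⟩
  have hconv := convexHull_min key (convex_halfSpace_gt hlin ((inner ℝ v t : ℝ)))
  have := hconv htc
  simp only [Set.mem_setOf_eq] at this
  exact lt_irrefl _ this
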